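/- For every τ > 0 and every λ ≥ 0, the sum over all integers s ≥ 0 and all integers k lying in I_s of 2^(−λk − τ·N(k) + τ·ξ·B(k)) is at most 2^(τ·ξ)·2^(−τ)/(1 − 2^(−τ))². -/

import Mathlib

open scoped Classical ENNReal
open Real Set Filter

/-- The quadratic function `Q(s) = q·s²`. -/
noncomputable def Qf (q : ℤ) (s : ℝ) : ℝ := (q : ℝ) * s ^ 2

/-- The half-open interval `I_s = [2^(Q(s)), 2^(Q(s)) + Q(s+1) − Q(s) + Ξ)`. -/
noncomputable def Iset (q Ξ : ℤ) (s : ℝ) : Set ℝ :=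
  Set.Ico ((2 : ℝ) ^ (Qf q s)) ((2 : ℝ) ^ (Qf q s) + Qf q (s + 1) - Qf q s + (Ξ : ℝ))

/-- The half-open interval `J_s = [2^(Q(s)) + Q(s+1) − Q(s) + Ξ, 2^(Q(s+1)))`. -/
noncomputable def Jset (q Ξ : ℤ) (s : ℝ) : Set ℝ :=
  Set.Ico ((2 : ℝ) ^ (Qf q s) + Qf q (s + 1) - Qf q s + (Ξ : ℝ)) ((2 : ℝ) ^ (Qf q (s + 1)))

/-- The sequence `(x_j)` in `{0,1}`: `x_j = 0` iff `j + 1 ∈ I_s` for some integer `s ≥ 0`. -/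
noncomputable def xseq (q Ξ : ℤ) (j : ℕ) : ℕ :=
  if ∃ s : ℕ, ((j : ℝ) + 1) ∈ Iset q Ξ (s : ℝ) then 0 else 1

/-- `N(k) = #{ j ∈ {0,…,k−1} : x_j = 0 }`, with `N(0) = 0`. -/
noncomputable def Nf (q Ξ : ℤ) (k : ℕ) : ℕ :=
  ((Finset.range k).filter (fun j => xseq q Ξ j = 0)).card

/-- `B(0) = 0`, `B(1) = 1`, and for `k ≥ 2`,
`B(k) = 1 + #{ j ∈ {0,…,k−2} : x_j ≠ x_{j+1} }`. -/
noncomputable def Bf (q Ξ : ℤ) (k : ℕ) : ℕ :=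
  if k = 0 then 0
  else 1 + ((Finset.range (k - 1)).filter (fun j => xseq q Ξ j ≠ xseq q Ξ (j + 1))).card

/-- The length `|J_s| = 2^(Q(s+1)) − 2^(Q(s)) − (Q(s+1) − Q(s) + Ξ)` of `J_s`. -/
noncomputable def Jlen (q Ξ : ℤ) (s : ℝ) : ℝ :=
  (2 : ℝ) ^ (Qf q (s + 1)) - (2 : ℝ) ^ (Qf q s) - (Qf q (s + 1) - Qf q s + (Ξ : ℝ))

/-- `λ(s) = 1/|J_s|`. -/
noncomputable def lamf (q Ξ : ℤ) (s : ℝ) : ℝ := 1 / Jlen q Ξ s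

/-- The two-variable series `Π(τ,λ) = Σ_{k≥0} 2^(−λk − τ·N(k) + τ·ξ·B(k))`, a sum in `[0,∞]`. -/
noncomputable def Pi2 (q Ξ : ℤ) (ξ τ lam : ℝ) : ℝ≥0∞ :=
  ∑' k : ℕ, ENNReal.ofReal
    ((2 : ℝ) ^ (-lam * (k : ℝ) - τ * (Nf q Ξ k : ℝ) + τ * ξ * (Bf q Ξ k : ℝ)))

def Mn (q : ℤ) (s : ℕ) : ℕ := 2 ^ (q.toNat * s ^ 2)
def Ln (q Ξ : ℤ) (s : ℕ) : ℕ := (q * (2 * s + 1) + Ξ).toNat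
def An (q Ξ : ℤ) (s : ℕ) : ℕ := ∑ i ∈ Finset.range s, Ln q Ξ i

section basics
variable {q Ξ : ℤ} (hq : 3 ≤ q) (hqΞ : 1 ≤ q + Ξ)
include hq hqΞ

lemma Ln_cast (s : ℕ) : (Ln q Ξ s : ℤ) = q * (2 * s + 1) + Ξ := by
  have hs : (0:ℤ) ≤ (s:ℤ) := Int.natCast_nonneg s
  have h : (1:ℤ) ≤ q * (2 * s + 1) + Ξ := by nlinarith
  exact Int.toNat_of_nonneg (by linarith)

lemma Ln_pos (s : ℕ) : 1 ≤ Ln q Ξ s := by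
  have h := Ln_cast hq hqΞ s
  have hs : (0:ℤ) ≤ (s:ℤ) := Int.natCast_nonneg s
  have h1 : (1:ℤ) ≤ (Ln q Ξ s : ℤ) := by rw [h]; nlinarith
  exact_mod_cast h1

lemma An_succ (s : ℕ) : An q Ξ (s+1) = An q Ξ s + Ln q Ξ s := by
  simp [An, Finset.sum_range_succ]

lemma An_cast (s : ℕ) : (An q Ξ s : ℤ) = q * s ^ 2 + Ξ * s := by
  induction s with
  | zero => simp [An]
  | succ s ih =>
      rw [An_succ hq hqΞ]
      push_cast
      rw [ih, Ln_cast hq hqΞ]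
      push_cast
      ring

end basics

lemma Mn_pos (q : ℤ) (s : ℕ) : 1 ≤ Mn q s := Nat.one_le_two_pow

lemma Mn_le_Mn (q : ℤ) {s t : ℕ} (h : s ≤ t) : Mn q s ≤ Mn q t :=
  Nat.pow_le_pow_right (by norm_num)
    (Nat.mul_le_mul_left _ (Nat.pow_le_pow_left h 2))

lemma Mn_two {q : ℤ} (hq : 3 ≤ q) (s : ℕ) : 2 ≤ Mn q (s+1) := by
  have h1 : 1 ≤ q.toNat * (s+1)^2 := by
    have h2 : 3 ≤ q.toNat := by omega
    have h3 : 1 ≤ (s+1)^2 := Nat.one_le_pow _ _ (by omega)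
    nlinarith
  calc (2:ℕ) = 2^1 := rfl
  _ ≤ 2^(q.toNat * (s+1)^2) := Nat.pow_le_pow_right (by norm_num) h1

set_option linter.unusedSectionVars false

lemma hpow_int {q Ξ : ℤ} (hq : 3 ≤ q)
    (hpow : (q : ℝ) + 1 + (Ξ : ℝ) ≤ (2 : ℝ) ^ ((q : ℝ) - 1)) :
    q + 1 + Ξ ≤ 2 ^ (q.toNat - 1) := by
  have hq0 : (0:ℤ) ≤ q := by linarith
  have hqc : ((q.toNat : ℤ)) = q := Int.toNat_of_nonneg hq0
  have hqr : ((q.toNat : ℝ)) = (q : ℝ) := by exact_mod_cast congrArg (Int.cast : ℤ → ℝ) hqc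
  have h3 : 3 ≤ q.toNat := by omega
  have he : (q : ℝ) - 1 = ((q.toNat - 1 : ℕ) : ℝ) := by
    rw [Nat.cast_sub (by omega)]
    rw [hqr]; norm_num
  rw [he, Real.rpow_natCast] at hpow
  have : (q:ℝ) + 1 + (Ξ:ℝ) ≤ ((2 ^ (q.toNat - 1) : ℤ) : ℝ) := by
    push_cast
    exact hpow
  exact_mod_cast this

lemma claim_pow {q Ξ : ℤ} (hq : 3 ≤ q) (hqΞ : 1 ≤ q + Ξ)
    (hpi : q + 1 + Ξ ≤ 2 ^ (q.toNat - 1)) :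
    ∀ s : ℕ, q * (2 * s + 1) + Ξ + 1 ≤ 2 ^ (q.toNat * (2 * s + 1) - 1) := by
  have h3 : 3 ≤ q.toNat := by omega
  intro s
  induction s with
  | zero =>
      have he : q.toNat * (2 * 0 + 1) = q.toNat := by ring
      rw [he]
      push_cast
      linarith
  | succ s ih =>
      set c := q.toNat with hc
      have hqc : ((c : ℤ)) = q := Int.toNat_of_nonneg (by omega)
      have hd1 : 1 ≤ c * (2 * s + 1) := by nlinarith
      have hexp : c * (2 * (s+1) + 1) - 1 = (c * (2 * s + 1) - 1) + 2 * c := by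
        have : c * (2 * (s+1) + 1) = c * (2 * s + 1) + 2 * c := by ring
        omega
      rw [hexp, pow_add]
      set P : ℤ := 2 ^ (c * (2 * s + 1) - 1) with hP
      set X : ℤ := 2 ^ (2 * c) with hX
      have hA2 : (2:ℤ) ≤ q * (2 * s + 1) + Ξ + 1 := by
        have hs : (0:ℤ) ≤ (s:ℤ) := Int.natCast_nonneg s
        nlinarith
      have hXq : 4 * q ≤ X := by
        have hc2 : c < 2 ^ c := Nat.lt_two_pow_self (n := c)
        have h2c : (2:ℕ) ^ (2 * c) = 2 ^ c * 2 ^ c := by rw [two_mul, pow_add]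
        have hn : 4 * c ≤ 2 ^ (2 * c) := by
          rw [h2c]; nlinarith
        have : ((4 * c : ℕ) : ℤ) ≤ ((2 ^ (2*c) : ℕ) : ℤ) := by exact_mod_cast hn
        push_cast at this
        rw [hX]
        omega
      have hXpos : (0:ℤ) < X := by positivity
      have hq3 : (3:ℤ) ≤ q := hq
      -- goal : q*(2*(s+1)+1)+Ξ+1 ≤ P * X
      have hg : q * (2 * ((s:ℤ)+1) + 1) + Ξ + 1 = (q * (2 * s + 1) + Ξ + 1) + 2 * q := by
        push_cast; ring
      push_cast
      push_cast at ih
      rw [hg]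
      nlinarith [mul_le_mul_of_nonneg_right ih (le_of_lt hXpos),
        mul_le_mul_of_nonneg_right hA2 (by linarith : (0:ℤ) ≤ X - 1)]

lemma Mn_gap {q Ξ : ℤ} (hq : 3 ≤ q) (hqΞ : 1 ≤ q + Ξ)
    (hpi : q + 1 + Ξ ≤ 2 ^ (q.toNat - 1)) (s : ℕ) :
    Mn q s + Ln q Ξ s < Mn q (s+1) := by
  set c := q.toNat with hc
  have h3 : 3 ≤ c := by omega
  have hd1 : 1 ≤ c * (2 * s + 1) := by nlinarith
  have hLn : Ln q Ξ s + 1 ≤ 2 ^ (c * (2 * s + 1) - 1) := by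
    have h1 := claim_pow hq hqΞ hpi s
    have h2 := Ln_cast hq hqΞ s
    have : ((Ln q Ξ s : ℤ)) + 1 ≤ ((2 ^ (c * (2*s+1) - 1) : ℕ) : ℤ) := by
      rw [h2]; push_cast; exact h1
    exact_mod_cast this
  have hsq : c * (s+1)^2 = c * s^2 + c * (2*s+1) := by ring
  have hMn1 : Mn q (s+1) = Mn q s * 2 ^ (c * (2*s+1)) := by
    rw [Mn, Mn, hsq, pow_add]
  have hE : 2 ^ (c * (2*s+1)) = 2 ^ (c * (2*s+1) - 1) * 2 := by
    rw [← pow_succ]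
    congr 1
    omega
  have hMpos : 1 ≤ Mn q s := Mn_pos q s
  set E := 2 ^ (c * (2*s+1) - 1) with hEdef
  have hEpos : 1 ≤ E := Nat.one_le_two_pow
  rw [hMn1, hE]
  nlinarith

lemma rpow_Qf {q : ℤ} (hq : 3 ≤ q) (s : ℕ) :
    (2 : ℝ) ^ (Qf q (s : ℝ)) = (Mn q s : ℝ) := by
  have hqc : ((q.toNat : ℤ)) = q := Int.toNat_of_nonneg (by linarith)
  have hqr : ((q.toNat : ℝ)) = (q : ℝ) := by exact_mod_cast congrArg (Int.cast : ℤ → ℝ) hqc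
  have h1 : Qf q (s : ℝ) = ((q.toNat * s ^ 2 : ℕ) : ℝ) := by
    unfold Qf; push_cast [hqr]; ring
  rw [h1, Real.rpow_natCast, Mn]
  push_cast
  ring

lemma len_eq {q Ξ : ℤ} (hq : 3 ≤ q) (hqΞ : 1 ≤ q + Ξ) (s : ℕ) :
    Qf q ((s : ℝ) + 1) - Qf q (s : ℝ) + (Ξ : ℝ) = (Ln q Ξ s : ℝ) := by
  have h : ((Ln q Ξ s : ℕ) : ℝ) = ((q * (2 * s + 1) + Ξ : ℤ) : ℝ) := by
    exact_mod_cast congrArg (Int.cast : ℤ → ℝ) (Ln_cast hq hqΞ s)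
  rw [h]
  unfold Qf
  push_cast
  ring

lemma mem_iff {q Ξ : ℤ} (hq : 3 ≤ q) (hqΞ : 1 ≤ q + Ξ) (k s : ℕ) :
    ((k : ℝ) ∈ Iset q Ξ (s : ℝ)) ↔ (Mn q s ≤ k ∧ k < Mn q s + Ln q Ξ s) := by
  unfold Iset
  rw [Set.mem_Ico]
  have hub : (2 : ℝ) ^ (Qf q (s:ℝ)) + Qf q ((s:ℝ) + 1) - Qf q (s:ℝ) + (Ξ : ℝ)
      = (Mn q s : ℝ) + (Ln q Ξ s : ℝ) := by
    rw [← len_eq hq hqΞ s, ← rpow_Qf hq s]; ring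
  rw [hub, rpow_Qf hq s]
  constructor
  · rintro ⟨h1, h2⟩
    constructor
    · exact_mod_cast h1
    · exact_mod_cast h2
  · rintro ⟨h1, h2⟩
    constructor
    · exact_mod_cast h1
    · exact_mod_cast h2

lemma xseq_zero_of_block {q Ξ : ℤ} (hq : 3 ≤ q) (hqΞ : 1 ≤ q + Ξ) {j s : ℕ}
    (h1 : Mn q s ≤ j + 1) (h2 : j + 1 < Mn q s + Ln q Ξ s) :
    xseq q Ξ j = 0 := by
  unfold xseq
  rw [if_pos]
  refine ⟨s, ?_⟩
  have : (((j+1 : ℕ)) : ℝ) ∈ Iset q Ξ (s : ℝ) := (mem_iff hq hqΞ (j+1) s).2 ⟨h1, h2⟩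
  push_cast at this
  exact this

lemma xseq_one {q Ξ : ℤ} (hq : 3 ≤ q) (hqΞ : 1 ≤ q + Ξ) {j : ℕ}
    (h : ∀ s : ℕ, ¬(Mn q s ≤ j + 1 ∧ j + 1 < Mn q s + Ln q Ξ s)) :
    xseq q Ξ j = 1 := by
  unfold xseq
  rw [if_neg]
  rintro ⟨s, hs⟩
  refine h s ((mem_iff hq hqΞ (j+1) s).1 ?_)
  push_cast
  exact hs

lemma gap_no_block {q Ξ : ℤ} (hq : 3 ≤ q) (hqΞ : 1 ≤ q + Ξ)
    (hg : ∀ s, Mn q s + Ln q Ξ s < Mn q (s+1)) {m s : ℕ}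
    (h1 : Mn q s + Ln q Ξ s ≤ m) (h2 : m < Mn q (s+1)) :
    ∀ s', ¬(Mn q s' ≤ m ∧ m < Mn q s' + Ln q Ξ s') := by
  rintro s' ⟨ha, hb⟩
  rcases le_or_gt s' s with h | h
  · have hmono : Mn q s' + Ln q Ξ s' ≤ Mn q s + Ln q Ξ s := by
      rcases eq_or_lt_of_le h with rfl | hlt
      · exact le_rfl
      · have h1' : Mn q s' + Ln q Ξ s' < Mn q (s'+1) := hg s'
        have h2' : Mn q (s'+1) ≤ Mn q s := Mn_le_Mn q hlt
        omega
    omega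
  · have : Mn q (s+1) ≤ Mn q s' := Mn_le_Mn q h
    omega

lemma xseq_one_of_gap {q Ξ : ℤ} (hq : 3 ≤ q) (hqΞ : 1 ≤ q + Ξ)
    (hg : ∀ s, Mn q s + Ln q Ξ s < Mn q (s+1)) {j s : ℕ}
    (h1 : Mn q s + Ln q Ξ s ≤ j + 1) (h2 : j + 1 < Mn q (s+1)) :
    xseq q Ξ j = 1 :=
  xseq_one hq hqΞ (gap_no_block hq hqΞ hg h1 h2)

lemma Nf_succ (q Ξ : ℤ) (k : ℕ) :
    Nf q Ξ (k+1) = Nf q Ξ k + (if xseq q Ξ k = 0 then 1 else 0) := by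
  unfold Nf
  rw [Finset.range_add_one, Finset.filter_insert]
  split
  · rw [Finset.card_insert_of_notMem (by simp)]
  · simp

lemma Bf_succ (q Ξ : ℤ) (k : ℕ) :
    Bf q Ξ (k+2) = Bf q Ξ (k+1) + (if xseq q Ξ k = xseq q Ξ (k+1) then 0 else 1) := by
  unfold Bf
  rw [if_neg (by omega), if_neg (by omega)]
  have h1 : k + 2 - 1 = k + 1 := by omega
  have h2 : k + 1 - 1 = k := by omega
  rw [h1, h2, Finset.range_add_one, Finset.filter_insert]
  by_cases h : xseq q Ξ k = xseq q Ξ (k+1)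
  · rw [if_neg (by simpa using h), if_pos h]
    omega
  · rw [if_pos h, if_neg h, Finset.card_insert_of_notMem (by simp)]
    omega

lemma main_NB {q Ξ : ℤ} (hq : 3 ≤ q) (hqΞ : 1 ≤ q + Ξ)
    (hg : ∀ s, Mn q s + Ln q Ξ s < Mn q (s+1)) :
    ∀ k s : ℕ, Mn q s ≤ k → k < Mn q (s+1) →
      (k < Mn q s + Ln q Ξ s → Nf q Ξ k = An q Ξ s + (k + 1 - Mn q s) ∧ Bf q Ξ k = 2*s+1) ∧
      (Mn q s + Ln q Ξ s ≤ k → Nf q Ξ k = An q Ξ (s+1) ∧ Bf q Ξ k = 2*s+2) := by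
  intro k
  induction k with
  | zero =>
      intro s h1 _
      exact absurd h1 (by have := Mn_pos q s; omega)
  | succ k ih =>
      intro s h1 h2
      have hLpos := Ln_pos hq hqΞ s
      have hMpos := Mn_pos q s
      rcases Nat.lt_or_ge (k+1) (Mn q s + Ln q Ξ s) with hin | hout
      · refine ⟨fun _ => ?_, fun h => absurd h (by omega)⟩
        rcases Nat.eq_or_lt_of_le h1 with heq | hlt
        · -- k + 1 = Mn q s
          match s with
          | 0 =>
              have hM0 : Mn q 0 = 1 := by simp [Mn]
              have hk : k = 0 := by omega
              subst hk
              have hx0 : xseq q Ξ 0 = 0 :=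
                xseq_zero_of_block hq hqΞ (s := 0) (by omega) (by omega)
              refine ⟨?_, ?_⟩
              · rw [Nf_succ, if_pos hx0]
                simp [Nf, An, hM0]
              · simp [Bf]
          | t+1 =>
              have hgt := hg t
              have hLt := Ln_pos hq hqΞ t
              have hgapt : Mn q t + Ln q Ξ t ≤ k := by omega
              have hkub : k < Mn q (t+1) := by omega
              have hMt : Mn q t ≤ k := by omega
              obtain ⟨hNk, hBk⟩ := (ih t hMt hkub).2 hgapt
              have hxk : xseq q Ξ k = 0 :=
                xseq_zero_of_block hq hqΞ (s := t+1) (by omega) (by omega)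
              have hM2 : 2 ≤ Mn q (t+1) := Mn_two hq t
              obtain ⟨m, rfl⟩ : ∃ m, k = m + 1 := ⟨k-1, by omega⟩
              have hxm : xseq q Ξ m = 1 :=
                xseq_one_of_gap hq hqΞ hg (s := t) (by omega) (by omega)
              refine ⟨?_, ?_⟩
              · rw [Nf_succ, if_pos hxk, hNk]
                have h5 : (m+1) + 1 + 1 - Mn q (t+1) = 1 := by omega
                rw [h5, An_succ hq hqΞ]
              · rw [Bf_succ, if_neg (by omega), hBk]
                omega
        · -- Mn q s < k + 1, k in block s too
          obtain ⟨hNk, hBk⟩ := (ih s (by omega) (by omega)).1 (by omega)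
          have hxk : xseq q Ξ k = 0 := xseq_zero_of_block hq hqΞ h1 hin
          obtain ⟨m, rfl⟩ : ∃ m, k = m + 1 := ⟨k-1, by omega⟩
          have hxm : xseq q Ξ m = 0 :=
            xseq_zero_of_block hq hqΞ (s := s) (by omega) (by omega)
          refine ⟨?_, ?_⟩
          · rw [Nf_succ, if_pos hxk, hNk]
            omega
          · rw [Bf_succ, if_pos (by omega), hBk]
      · refine ⟨fun h => absurd h (by omega), fun _ => ?_⟩
        have hxk : xseq q Ξ k = 1 := xseq_one_of_gap hq hqΞ hg hout h2
        rcases Nat.eq_or_lt_of_le hout with heq | hlt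
        · -- k + 1 = Mn q s + Ln q Ξ s
          obtain ⟨hNk, hBk⟩ := (ih s (by omega) (by omega)).1 (by omega)
          obtain ⟨m, rfl⟩ : ∃ m, k = m + 1 := ⟨k-1, by omega⟩
          have hxm : xseq q Ξ m = 0 :=
            xseq_zero_of_block hq hqΞ (s := s) (by omega) (by omega)
          refine ⟨?_, ?_⟩
          · rw [Nf_succ, if_neg (by omega), hNk, An_succ hq hqΞ]
            omega
          · rw [Bf_succ, if_neg (by omega), hBk]
        · -- Mn q s + Ln q Ξ s ≤ k
          obtain ⟨hNk, hBk⟩ := (ih s (by omega) (by omega)).2 (by omega)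
          obtain ⟨m, rfl⟩ : ∃ m, k = m + 1 := ⟨k-1, by omega⟩
          have hxm : xseq q Ξ m = 1 :=
            xseq_one_of_gap hq hqΞ hg (s := s) (by omega) (by omega)
          refine ⟨?_, ?_⟩
          · rw [Nf_succ, if_neg (by omega), hNk]
            omega
          · rw [Bf_succ, if_pos (by omega), hBk]

lemma key_bound {q Ξ : ℤ} (hq : 3 ≤ q) (hqΞ : 1 ≤ q + Ξ)
    (hg : ∀ s, Mn q s + Ln q Ξ s < Mn q (s+1))
    {ξ τ lam : ℝ} (hξ1 : 1 ≤ (Ξ : ℝ) - 2 * ξ) (hτ : 0 < τ) (hlam : 0 ≤ lam)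
    (s k : ℕ) (hk1 : Mn q s ≤ k) (hk2 : k < Mn q s + Ln q Ξ s) :
    (2 : ℝ) ^ (-lam * (k : ℝ) - τ * (Nf q Ξ k : ℝ) + τ * ξ * (Bf q Ξ k : ℝ))
      ≤ (2 : ℝ) ^ (τ * ξ) * ((2:ℝ)^(-τ)) ^ s * ((2:ℝ)^(-τ)) ^ (k - Mn q s + 1) := by
  have hrpow : ∀ n : ℕ, ((2:ℝ)^(-τ)) ^ n = (2:ℝ) ^ (-τ * (n:ℝ)) := by
    intro n
    rw [← Real.rpow_natCast ((2:ℝ)^(-τ)) n, ← Real.rpow_mul (by norm_num : (0:ℝ) ≤ 2)]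
  rw [hrpow, hrpow, ← Real.rpow_add two_pos, ← Real.rpow_add two_pos]
  apply (Real.rpow_le_rpow_left_iff (by norm_num : (1:ℝ) < 2)).2
  obtain ⟨hN, hB⟩ := (main_NB hq hqΞ hg k s hk1 (by have := hg s; omega)).1 hk2
  rw [hN, hB]
  have hAn : ((An q Ξ s : ℕ) : ℝ) = (q:ℝ) * (s:ℝ)^2 + (Ξ:ℝ) * (s:ℝ) := by
    exact_mod_cast congrArg (Int.cast : ℤ → ℝ) (An_cast hq hqΞ s)
  have hcast1 : ((An q Ξ s + (k + 1 - Mn q s) : ℕ) : ℝ)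
      = ((An q Ξ s : ℕ) : ℝ) + ((k:ℝ) + 1 - (Mn q s : ℝ)) := by
    push_cast [Nat.cast_sub (by omega : Mn q s ≤ k + 1)]
    ring
  have hcast2 : ((k - Mn q s + 1 : ℕ) : ℝ) = (k:ℝ) - (Mn q s : ℝ) + 1 := by
    push_cast [Nat.cast_sub hk1]
    ring
  rw [hcast1, hcast2, hAn]
  push_cast
  have h1 : 0 ≤ lam * (k:ℝ) := mul_nonneg hlam (Nat.cast_nonneg k)
  have h2 : 0 ≤ τ * ((q:ℝ) * (s:ℝ)^2) :=
    mul_nonneg hτ.le (mul_nonneg (by exact_mod_cast (by linarith : (0:ℤ) ≤ q)) (sq_nonneg _))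
  have h3 : 0 ≤ τ * (((Ξ:ℝ) - 2*ξ - 1) * (s:ℝ)) :=
    mul_nonneg hτ.le (mul_nonneg (by linarith) (Nat.cast_nonneg s))
  nlinarith [h1, h2, h3]


theorem stmt11 (Ξ q : ℤ) (hq : 3 ≤ q) (hqΞ : 1 ≤ q + Ξ)
    (hpow : (q : ℝ) + 1 + (Ξ : ℝ) ≤ (2 : ℝ) ^ ((q : ℝ) - 1))
    (ξ : ℝ) (hξ1 : 1 ≤ (Ξ : ℝ) - 2 * ξ) (hξ2 : (Ξ : ℝ) - 2 * ξ ≤ 2) :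
    ∀ τ : ℝ, 0 < τ → ∀ lam : ℝ, 0 ≤ lam →
      (∑' s : ℕ, ∑' k : ℕ,
          if (k : ℝ) ∈ Iset q Ξ (s : ℝ) then
            ENNReal.ofReal ((2 : ℝ) ^ (-lam * (k : ℝ) - τ * (Nf q Ξ k : ℝ)
              + τ * ξ * (Bf q Ξ k : ℝ)))
          else 0) ≤
        ENNReal.ofReal ((2 : ℝ) ^ (τ * ξ) * (2 : ℝ) ^ (-τ) / (1 - (2 : ℝ) ^ (-τ)) ^ 2) := by
  intro τ hτ lam hlam
  have hg : ∀ s, Mn q s + Ln q Ξ s < Mn q (s+1) := Mn_gap hq hqΞ (hpow_int hq hpow)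
  set r : ℝ := (2:ℝ) ^ (-τ) with hrdef
  have hr0 : 0 < r := Real.rpow_pos_of_pos two_pos _
  have hr1 : r < 1 := Real.rpow_lt_one_of_one_lt_of_neg one_lt_two (by linarith)
  set c0 : ℝ := (2:ℝ) ^ (τ * ξ) with hc0def
  have hc0 : 0 ≤ c0 := (Real.rpow_pos_of_pos two_pos _).le
  set x : ℝ≥0∞ := ENNReal.ofReal r with hxdef
  -- termwise bound
  have key : ∀ s k : ℕ,
      (if (k : ℝ) ∈ Iset q Ξ (s : ℝ) then
          ENNReal.ofReal ((2 : ℝ) ^ (-lam * (k : ℝ) - τ * (Nf q Ξ k : ℝ)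
            + τ * ξ * (Bf q Ξ k : ℝ)))
        else 0)
      ≤ (if Mn q s ≤ k then ENNReal.ofReal (c0 * r ^ s * r ^ (k - Mn q s + 1)) else 0) := by
    intro s k
    by_cases hmem : (k : ℝ) ∈ Iset q Ξ (s : ℝ)
    · obtain ⟨h1, h2⟩ := (mem_iff hq hqΞ k s).1 hmem
      rw [if_pos hmem, if_pos h1]
      exact ENNReal.ofReal_le_ofReal (key_bound hq hqΞ hg hξ1 hτ hlam s k h1 h2)
    · rw [if_neg hmem]
      exact zero_le
  -- inner sums
  have inner_eq : ∀ s : ℕ,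
      (∑' k : ℕ, if Mn q s ≤ k then ENNReal.ofReal (c0 * r ^ s * r ^ (k - Mn q s + 1)) else 0)
        = ENNReal.ofReal (c0 * r ^ s) * (x * (1 - x)⁻¹) := by
    intro s
    set G : ℕ → ℝ≥0∞ :=
      fun k => if Mn q s ≤ k then ENNReal.ofReal (c0 * r ^ s * r ^ (k - Mn q s + 1)) else 0
      with hGdef
    have hinj : Function.Injective (fun i : ℕ => Mn q s + i) := fun a b h => Nat.add_left_cancel h
    have hsupp : Function.support G ⊆ Set.range (fun i : ℕ => Mn q s + i) := by
      intro k hk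
      by_cases h : Mn q s ≤ k
      · exact ⟨k - Mn q s, by show Mn q s + (k - Mn q s) = k; omega⟩
      · exact absurd (by rw [hGdef]; simp [if_neg h]) hk
    have hshift : (∑' k : ℕ, G k) = ∑' i : ℕ, G (Mn q s + i) :=
      (Function.Injective.tsum_eq hinj hsupp).symm
    have hGi : ∀ i : ℕ, G (Mn q s + i) = ENNReal.ofReal (c0 * r ^ s) * x ^ (i+1) := by
      intro i
      rw [hGdef]
      simp only [if_pos (Nat.le_add_right _ _)]
      have h5 : Mn q s + i - Mn q s + 1 = i + 1 := by omega
      rw [h5, ENNReal.ofReal_mul (by positivity), ENNReal.ofReal_pow hr0.le]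
    rw [hshift]
    simp only [hGi]
    rw [ENNReal.tsum_mul_left, ENNReal.tsum_geometric_add_one]
  calc (∑' s : ℕ, ∑' k : ℕ,
          if (k : ℝ) ∈ Iset q Ξ (s : ℝ) then
            ENNReal.ofReal ((2 : ℝ) ^ (-lam * (k : ℝ) - τ * (Nf q Ξ k : ℝ)
              + τ * ξ * (Bf q Ξ k : ℝ)))
          else 0)
      ≤ ∑' s : ℕ, ∑' k : ℕ,
          (if Mn q s ≤ k then ENNReal.ofReal (c0 * r ^ s * r ^ (k - Mn q s + 1)) else 0) :=
        ENNReal.tsum_le_tsum (fun s => ENNReal.tsum_le_tsum (key s))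
    _ = ∑' s : ℕ, ENNReal.ofReal (c0 * r ^ s) * (x * (1 - x)⁻¹) := by
        exact tsum_congr inner_eq
    _ = (∑' s : ℕ, ENNReal.ofReal c0 * x ^ s) * (x * (1 - x)⁻¹) := by
        rw [ENNReal.tsum_mul_right]
        congr 1
        refine tsum_congr (fun s => ?_)
        rw [ENNReal.ofReal_mul hc0, ENNReal.ofReal_pow hr0.le]
    _ = ENNReal.ofReal c0 * (1 - x)⁻¹ * (x * (1 - x)⁻¹) := by
        rw [ENNReal.tsum_mul_left, ENNReal.tsum_geometric]
    _ = ENNReal.ofReal (c0 * r / (1 - r) ^ 2) := by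
        have hsub : ENNReal.ofReal (1 - r) = 1 - x := by
          rw [ENNReal.ofReal_sub _ hr0.le, ENNReal.ofReal_one]
        have hinv : (1 - x)⁻¹ = ENNReal.ofReal (1 - r)⁻¹ := by
          rw [← hsub, ← ENNReal.ofReal_inv_of_pos (by linarith)]
        have hre : c0 * r / (1 - r) ^ 2 = c0 * ((1-r)⁻¹ * (r * (1-r)⁻¹)) := by
          field_simp
        rw [hre, ENNReal.ofReal_mul hc0, ENNReal.ofReal_mul (inv_nonneg.2 (by linarith : (0:ℝ) ≤ 1 - r)),
          ENNReal.ofReal_mul hr0.le, hinv]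
        ring
    _ = ENNReal.ofReal ((2 : ℝ) ^ (τ * ξ) * (2 : ℝ) ^ (-τ) / (1 - (2 : ℝ) ^ (-τ)) ^ 2) := by
        rw [hc0def, hrdef]
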